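/- If a c-space structure S on a topological space X contains all constant paths and every path of S is splittable in S (i.e., for each a ∈ S, the two halves a'(t) = a(t/2) and a''(t) = a((t+1)/2) lie in S), then S is a d-space structure on X. -/
import Mathlib


open unitInterval Set

noncomputable def conc {X : Type*} (a b : I → X) : I → X := fun t =>
  if h : (t : ℝ) ≤ 1 / 2 then
    a ⟨2 * (t : ℝ), by constructor <;> nlinarith [t.2.1, t.2.2]⟩
  else
    b ⟨2 * (t : ℝ) - 1, by have h' := not_le.mp h; constructor <;> nlinarith [t.2.1, t.2.2]⟩

structure IsCStructure {X : Type*} [TopologicalSpace X] (S : Set (I → X)) : Prop where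
  cont : ∀ a ∈ S, Continuous a
  const_src : ∀ a ∈ S, (fun _ : I => a 0) ∈ S
  const_tgt : ∀ a ∈ S, (fun _ : I => a 1) ∈ S
  concat : ∀ a ∈ S, ∀ b ∈ S, a 1 = b 0 → conc a b ∈ S
  reparam : ∀ a ∈ S, ∀ ρ : I → I, Continuous ρ → Monotone ρ → Function.Surjective ρ → a ∘ ρ ∈ S

structure IsDStructure {X : Type*} [TopologicalSpace X] (S : Set (I → X)) : Prop where
  cont : ∀ a ∈ S, Continuous a
  const : ∀ x : X, (fun _ : I => x) ∈ S
  concat : ∀ a ∈ S, ∀ b ∈ S, a 1 = b 0 → conc a b ∈ S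
  reparam : ∀ a ∈ S, ∀ ρ : I → I, Continuous ρ → Monotone ρ → a ∘ ρ ∈ S

def IsFlexible {X : Type*} [TopologicalSpace X] (S : Set (I → X)) (a : I → X) : Prop :=
  a ∈ S ∧ ∀ (t₁ t₂ : ℝ) (h0 : 0 ≤ t₁) (h12 : t₁ < t₂) (h1 : t₂ ≤ 1),
    (fun t : I => a ⟨(t₂ - t₁) * (t : ℝ) + t₁, by
      constructor <;>
        nlinarith [t.2.1, t.2.2, mul_nonneg (sub_nonneg.mpr h12.le) t.2.1,
          mul_le_of_le_one_right (sub_nonneg.mpr h12.le) t.2.2]⟩) ∈ S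

section Aux

lemma conc_eq_ite {X : Type*} (f g : I → X) (t : I) :
    conc f g t = if (t : ℝ) ≤ 1/2
      then f (projIcc 0 1 zero_le_one (2 * (t : ℝ)))
      else g (projIcc 0 1 zero_le_one (2 * (t : ℝ) - 1)) := by
  by_cases ht : (t : ℝ) ≤ 1/2
  · rw [if_pos ht, conc, dif_pos ht,
      projIcc_of_mem zero_le_one (show 2 * (t : ℝ) ∈ Icc (0:ℝ) 1 by
        constructor <;> nlinarith [t.2.1, t.2.2])]
  · rw [if_neg ht, conc, dif_neg ht,
      projIcc_of_mem zero_le_one (show 2 * (t : ℝ) - 1 ∈ Icc (0:ℝ) 1 by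
        have := not_le.mp ht; constructor <;> nlinarith [t.2.1, t.2.2])]

lemma conc_continuous {X : Type*} [TopologicalSpace X] {f g : I → X}
    (hf : Continuous f) (hg : Continuous g) (h : f 1 = g 0) :
    Continuous (conc f g) := by
  have heq : conc f g = fun t : I => if (t : ℝ) ≤ 1/2
      then f (projIcc 0 1 zero_le_one (2 * (t : ℝ)))
      else g (projIcc 0 1 zero_le_one (2 * (t : ℝ) - 1)) :=
    funext (conc_eq_ite f g)
  rw [heq]
  apply Continuous.if_le
  · exact hf.comp (continuous_projIcc.comp (by continuity))
  · exact hg.comp (continuous_projIcc.comp (by continuity))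
  · exact continuous_subtype_val
  · exact continuous_const
  · intro t ht
    have h2 : 2 * (t : ℝ) - 1 = 0 := by rw [ht]; ring
    have h1 : 2 * (t : ℝ) = 1 := by rw [ht]; ring
    rw [h2, h1, projIcc_right, projIcc_left]
    exact h

lemma conc_monotone {f g : I → I} (hf : Monotone f) (hg : Monotone g) (h : f 1 ≤ g 0) :
    Monotone (conc f g) := by
  intro s t hst
  have hst' : (s : ℝ) ≤ (t : ℝ) := hst
  rw [conc, conc]
  split_ifs with hs ht ht
  · exact hf (by rw [← Subtype.coe_le_coe]; show 2 * (s:ℝ) ≤ 2 * (t:ℝ); linarith)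
  · calc f ⟨2 * (s : ℝ), _⟩ ≤ f 1 := hf (by
        rw [← Subtype.coe_le_coe, Icc.coe_one]; show 2 * (s:ℝ) ≤ 1; linarith)
      _ ≤ g 0 := h
      _ ≤ g ⟨2 * (t : ℝ) - 1, _⟩ := hg (by
        rw [← Subtype.coe_le_coe, Icc.coe_zero]
        show (0:ℝ) ≤ 2 * (t:ℝ) - 1
        have := not_le.mp ht; linarith)
  · exact absurd (le_trans hst' ht) hs
  · exact hg (by rw [← Subtype.coe_le_coe]; show 2*(s:ℝ) - 1 ≤ 2*(t:ℝ) - 1; linarith)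

/-- Linear path from `0` to `c` in `I`. -/
def lin0 (c : I) : I → I := fun t =>
  ⟨(c : ℝ) * t, by constructor <;> nlinarith [c.2.1, c.2.2, t.2.1, t.2.2]⟩

/-- Linear path from `c` to `1` in `I`. -/
def lin1 (c : I) : I → I := fun t =>
  ⟨(c : ℝ) + (1 - (c : ℝ)) * t, by constructor <;> nlinarith [c.2.1, c.2.2, t.2.1, t.2.2]⟩

/-- Surjective extension of an increasing map `ρ : I → I`. -/
noncomputable def extMap (ρ : I → I) : I → I := conc (lin0 (ρ 0)) (conc ρ (lin1 (ρ 1)))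

lemma lin0_continuous (c : I) : Continuous (lin0 c) :=
  Continuous.subtype_mk (continuous_const.mul continuous_subtype_val) _

lemma lin1_continuous (c : I) : Continuous (lin1 c) :=
  Continuous.subtype_mk (continuous_const.add (continuous_const.mul continuous_subtype_val)) _

lemma lin0_monotone (c : I) : Monotone (lin0 c) := fun s t hst => by
  rw [← Subtype.coe_le_coe]
  exact mul_le_mul_of_nonneg_left (Subtype.coe_le_coe.mpr hst) c.2.1

lemma lin1_monotone (c : I) : Monotone (lin1 c) := fun s t hst => by
  rw [← Subtype.coe_le_coe]
  show (c:ℝ) + (1 - c) * s ≤ (c:ℝ) + (1 - c) * t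
  have h : (s : ℝ) ≤ t := hst
  nlinarith [c.2.2]

lemma lin0_one (c : I) : lin0 c 1 = c := Subtype.ext (by show (c:ℝ) * ((1:I):ℝ) = c; simp)

lemma lin1_zero (c : I) : lin1 c 0 = c :=
  Subtype.ext (by show (c:ℝ) + (1 - c) * ((0:I):ℝ) = c; simp)

lemma lin0_zero (c : I) : lin0 c 0 = 0 := Subtype.ext (by show (c:ℝ) * ((0:I):ℝ) = 0; simp)

lemma lin1_one (c : I) : lin1 c 1 = 1 :=
  Subtype.ext (by show (c:ℝ) + (1 - c) * ((1:I):ℝ) = 1; simp)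

lemma conc_zero {X : Type*} (f g : I → X) : conc f g 0 = f 0 := by
  rw [conc, dif_pos (by norm_num : ((0 : I) : ℝ) ≤ 1/2)]
  congr 1
  exact Subtype.ext (by show 2 * ((0:I):ℝ) = ((0:I):ℝ); norm_num)

lemma conc_one {X : Type*} (f g : I → X) : conc f g 1 = g 1 := by
  rw [conc, dif_neg (by norm_num : ¬ ((1 : I) : ℝ) ≤ 1/2)]
  congr 1
  exact Subtype.ext (by show 2 * ((1:I):ℝ) - 1 = ((1:I):ℝ); norm_num)

lemma extMap_continuous {ρ : I → I} (hρc : Continuous ρ) : Continuous (extMap ρ) :=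
  conc_continuous (lin0_continuous _)
    (conc_continuous hρc (lin1_continuous _) (lin1_zero _).symm)
    (by rw [lin0_one, conc_zero])

lemma extMap_monotone {ρ : I → I} (hρm : Monotone ρ) : Monotone (extMap ρ) :=
  conc_monotone (lin0_monotone _)
    (conc_monotone hρm (lin1_monotone _) (lin1_zero _).symm.le)
    (by rw [lin0_one, conc_zero])

lemma extMap_surjective {ρ : I → I} (hρc : Continuous ρ) : Function.Surjective (extMap ρ) := by
  intro y
  haveI : PreconnectedSpace I := Subtype.preconnectedSpace isPreconnected_Icc
  have hη0 : extMap ρ 0 = 0 := by rw [extMap, conc_zero, lin0_zero]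
  have hη1 : extMap ρ 1 = 1 := by rw [extMap, conc_one, conc_one, lin1_one]
  have hiv := intermediate_value_univ (0 : I) (1 : I)
    (continuous_subtype_val.comp (extMap_continuous hρc) : Continuous fun t => (extMap ρ t : ℝ))
  have hy : (y : ℝ) ∈ Icc ((fun t => (extMap ρ t : ℝ)) 0) ((fun t => (extMap ρ t : ℝ)) 1) := by
    dsimp only
    rw [hη0, hη1, Icc.coe_zero, Icc.coe_one]
    exact ⟨y.2.1, y.2.2⟩
  obtain ⟨t, ht⟩ := hiv hy
  exact ⟨t, Subtype.ext ht⟩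

lemma conc_apply_left {X : Type*} (f g : I → X) (u s : I)
    (hs : (s : ℝ) ≤ 1/2) (hu : (u : ℝ) = 2 * (s : ℝ)) :
    conc f g s = f u := by
  rw [conc, dif_pos hs]
  congr 1
  exact Subtype.ext hu.symm

lemma conc_apply_right {X : Type*} (f g : I → X) (u s : I)
    (hs : ¬ (s : ℝ) ≤ 1/2) (hu : (u : ℝ) = 2 * (s : ℝ) - 1) :
    conc f g s = g u := by
  rw [conc, dif_neg hs]
  congr 1
  exact Subtype.ext hu.symm

/-- The middle quarter `[1/2, 3/4]` of `extMap ρ` recovers `ρ`. -/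
lemma extMap_middle {ρ : I → I} (s t : I) (h : (s : ℝ) = (((t : ℝ) / 2) + 1) / 2) :
    extMap ρ s = ρ t := by
  show conc (lin0 (ρ 0)) (conc ρ (lin1 (ρ 1))) s = ρ t
  by_cases ht : (t : ℝ) = 0
  · rw [conc_apply_left _ _ 1 s (by rw [h, ht]; norm_num)
      (by rw [Icc.coe_one, h, ht]; norm_num), lin0_one]
    exact congrArg ρ (Subtype.ext (by rw [Icc.coe_zero, ht]))
  · have ht' : 0 < (t : ℝ) := lt_of_le_of_ne t.2.1 (Ne.symm ht)
    have hmem : (t : ℝ) / 2 ∈ Icc (0:ℝ) 1 := ⟨by linarith [t.2.1], by linarith [t.2.2]⟩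
    rw [conc_apply_right _ _ (⟨(t : ℝ) / 2, hmem⟩ : I) s
        (by rw [h]; push_neg; linarith)
        (by show (t : ℝ) / 2 = 2 * (s : ℝ) - 1; rw [h]; ring)]
    rw [conc_apply_left _ _ t (⟨(t : ℝ) / 2, hmem⟩ : I)
        (by show (t : ℝ) / 2 ≤ 1/2; linarith [t.2.2])
        (by show (t : ℝ) = 2 * ((t : ℝ) / 2); ring)]

end Aux

/-- If a c-space structure contains all constant paths and all its paths are splittable
(both halves are again in the structure), then it is a d-space structure. -/
theorem cStructure_splittable_isDStructure {X : Type*} [TopologicalSpace X]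
    (S : Set (I → X)) (hS : IsCStructure S)
    (hconst : ∀ x : X, (fun _ : I => x) ∈ S)
    (hsplit : ∀ a ∈ S,
      (fun t : I => a ⟨(t : ℝ) / 2, by constructor <;> nlinarith [t.2.1, t.2.2]⟩) ∈ S ∧
      (fun t : I => a ⟨((t : ℝ) + 1) / 2, by constructor <;> nlinarith [t.2.1, t.2.2]⟩) ∈ S) :
    IsDStructure S := by
  refine ⟨hS.cont, hconst, hS.concat, ?_⟩
  intro a ha ρ hρc hρm
  have hw : a ∘ extMap ρ ∈ S :=
    hS.reparam a ha (extMap ρ) (extMap_continuous hρc) (extMap_monotone hρm)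
      (extMap_surjective hρc)
  have hw2 := (hsplit _ hw).2
  have hw3 := (hsplit _ hw2).1
  have key : a ∘ ρ = (fun t : I =>
      (fun s : I => (a ∘ extMap ρ) ⟨((s : ℝ) + 1) / 2,
        ⟨by linarith [s.2.1], by linarith [s.2.2]⟩⟩)
        ⟨(t : ℝ) / 2, ⟨by linarith [t.2.1], by linarith [t.2.2]⟩⟩) := by
    funext t
    simp only [Function.comp]
    exact (congrArg a (extMap_middle _ t rfl)).symm
  rw [key]
  exact hw3
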